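/- Let V be a finite-dimensional real inner product space, let U ⊆ V be an open set invariant under multiplication by nonzero real scalars and containing a nonzero point, and let f : V → ℂ be a finite exponential-polynomial, f(X) = Σ_{i=1}^m q_i(X) e^{⟨X, λ_i⟩} with q_i polynomials and λ_i ∈ V_ℂ* distinct. If f(X) → 0 as |X| → ∞ with X ∈ U, then f is identically zero. -/

import Mathlib

open scoped BigOperators

open Polynomial Filter Complex Set

/-- A function `p : V → ℂ` is a polynomial function if it lies in the `ℂ`-subalgebra of
functions generated by the real-linear maps `V → ℂ`. -/
def IsPolyFun {V : Type*} [AddCommGroup V] [Module ℝ V] (p : V → ℂ) : Prop :=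
  p ∈ Algebra.adjoin ℂ {q : V → ℂ | IsLinearMap ℝ q}

lemma exists_good_shift (s : Finset ℂ) (c₀ : ℂ) :
    ∃ t : ℝ, t ≠ 0 ∧ ∀ c ∈ s, c ≠ c₀ → Complex.exp (c * t) ≠ Complex.exp (c₀ * t) := by
  have hcnt : ∀ c : ℂ, c ≠ c₀ →
      Set.Countable {t : ℝ | Complex.exp (c * t) = Complex.exp (c₀ * t)} := by
    intro c hc
    have hsub : {t : ℝ | Complex.exp (c * t) = Complex.exp (c₀ * t)} ⊆
        ⋃ n : ℤ, {t : ℝ | ((c - c₀) * t : ℂ) = n * (2 * Real.pi * Complex.I)} := by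
      intro t ht
      rw [Set.mem_setOf_eq, Complex.exp_eq_exp_iff_exp_sub_eq_one, ← sub_mul,
        Complex.exp_eq_one_iff] at ht
      obtain ⟨n, hn⟩ := ht
      exact Set.mem_iUnion.2 ⟨n, hn⟩
    refine Set.Countable.mono hsub (Set.countable_iUnion fun n => ?_)
    refine Set.Subsingleton.countable (fun a ha b hb => ?_)
    have : ((c - c₀) * a : ℂ) = (c - c₀) * b := by
      rw [Set.mem_setOf_eq] at ha hb; rw [ha, hb]
    have hab : (a : ℂ) = (b : ℂ) := mul_left_cancel₀ (sub_ne_zero.2 hc) this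
    exact_mod_cast hab
  set B : Set ℝ := {0} ∪ ⋃ c ∈ (↑s : Set ℂ),
      {t : ℝ | c ≠ c₀ ∧ Complex.exp (c * t) = Complex.exp (c₀ * t)} with hB
  have hBc : B.Countable := by
    refine (Set.countable_singleton 0).union ?_
    refine Set.Countable.biUnion (s.countable_toSet) (fun c _ => ?_)
    by_cases hc : c = c₀
    · subst hc
      simp only [ne_eq, not_true_eq_false, false_and, Set.setOf_false]
      exact Set.countable_empty
    · exact (hcnt c hc).mono (fun t ht => ht.2)
  have : ∃ t : ℝ, t ∉ B := by
    by_contra h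
    push_neg at h
    have : (Set.univ : Set ℝ).Countable := hBc.mono (fun x _ => h x)
    exact Cardinal.not_countable_real this
  obtain ⟨t, ht⟩ := this
  rw [hB] at ht
  simp only [Set.mem_union, Set.mem_singleton_iff, Set.mem_iUnion, Set.mem_setOf_eq,
    not_or, not_exists, not_and] at ht
  exact ⟨t, ht.1, fun c hc hne => ht.2 c (Finset.mem_coe.2 hc) hne⟩

noncomputable def pmeasure (P : Polynomial ℂ) : ℕ := if P = 0 then 0 else P.natDegree + 1

lemma leadingCoeff_taylor' (r : ℂ) (p : Polynomial ℂ) :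
    (taylor r p).leadingCoeff = p.leadingCoeff := by
  rw [taylor_apply, Polynomial.leadingCoeff_comp (by simp [natDegree_X_add_C])]
  simp [leadingCoeff_X_add_C]

lemma expPoly_decay_eq_zero (n : ℕ) : ∀ (s : Finset ℂ) (P : ℂ → Polynomial ℂ),
    (∑ c ∈ s, pmeasure (P c)) ≤ n →
    Tendsto (fun t : ℝ => ∑ c ∈ s, (P c).eval (t:ℂ) * Complex.exp (c * t)) atTop (nhds 0) →
    Tendsto (fun t : ℝ => ∑ c ∈ s, (P c).eval (t:ℂ) * Complex.exp (c * t)) atBot (nhds 0) →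
    ∀ c ∈ s, P c = 0 := by
  induction n with
  | zero =>
    intro s P hm _ _ c hc
    by_contra hP
    have h0 : pmeasure (P c) = 0 :=
      Finset.sum_eq_zero_iff.mp (Nat.le_zero.mp hm) c hc
    simp [pmeasure, hP] at h0
  | succ n ih =>
    intro s P hm hTop hBot
    by_cases hall : ∀ c ∈ s, P c = 0
    · exact hall
    push_neg at hall
    obtain ⟨c₀, hc₀s, hc₀⟩ := hall
    exfalso
    obtain ⟨t₀, ht₀ne, hgood⟩ := exists_good_shift s c₀
    set Q : ℂ → Polynomial ℂ := fun c =>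
      C (Complex.exp (c * t₀)) * taylor (t₀:ℂ) (P c) - C (Complex.exp (c₀ * t₀)) * P c with hQdef
    have hQeval : ∀ (c : ℂ) (z : ℂ), (Q c).eval z =
        Complex.exp (c * t₀) * (P c).eval (z + t₀) - Complex.exp (c₀ * t₀) * (P c).eval z := by
      intro c z
      simp [hQdef, taylor_eval]
    have hfun : ∀ t : ℝ, (∑ c ∈ s, (Q c).eval (t:ℂ) * Complex.exp (c * t)) =
        (∑ c ∈ s, (P c).eval ((t + t₀ : ℝ):ℂ) * Complex.exp (c * ((t + t₀ : ℝ):ℂ)))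
          - Complex.exp (c₀ * t₀) * ∑ c ∈ s, (P c).eval (t:ℂ) * Complex.exp (c * t) := by
      intro t
      rw [Finset.mul_sum, ← Finset.sum_sub_distrib]
      refine Finset.sum_congr rfl (fun c _ => ?_)
      have hc : ((t + t₀ : ℝ) : ℂ) = (t:ℂ) + (t₀:ℂ) := by push_cast; ring
      rw [hc, hQeval c t, mul_add, Complex.exp_add]
      ring
    have h1 : Tendsto (fun t : ℝ => (t + t₀)) atTop atTop :=
      tendsto_atTop_add_const_right _ _ tendsto_id
    have h1b : Tendsto (fun t : ℝ => (t + t₀)) atBot atBot :=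
      tendsto_atBot_add_const_right _ _ tendsto_id
    have hTop' : Tendsto (fun t : ℝ => ∑ c ∈ s, (Q c).eval (t:ℂ) * Complex.exp (c * t))
        atTop (nhds 0) := by
      simp only [hfun]
      have := (hTop.comp h1).sub (hTop.const_mul (Complex.exp (c₀ * t₀)))
      simpa using this
    have hBot' : Tendsto (fun t : ℝ => ∑ c ∈ s, (Q c).eval (t:ℂ) * Complex.exp (c * t))
        atBot (nhds 0) := by
      simp only [hfun]
      have := (hBot.comp h1b).sub (hBot.const_mul (Complex.exp (c₀ * t₀)))
      simpa using this
    have hQle : ∀ c ∈ s, pmeasure (Q c) ≤ pmeasure (P c) := by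
      intro c _
      by_cases h0 : Q c = 0
      · simp [pmeasure, h0]
      have hP0 : P c ≠ 0 := by
        intro h
        apply h0
        simp [hQdef, h]
      simp only [pmeasure, if_neg h0, if_neg hP0, add_le_add_iff_right]
      refine le_trans (natDegree_sub_le _ _) (max_le ?_ ?_)
      · exact le_trans (natDegree_C_mul_le _ _) (le_of_eq (natDegree_taylor _ _))
      · exact natDegree_C_mul_le _ _
    have hQlt : pmeasure (Q c₀) < pmeasure (P c₀) := by
      have hQc₀ : Q c₀ = C (Complex.exp (c₀ * t₀)) * (taylor (t₀:ℂ) (P c₀) - P c₀) := by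
        rw [hQdef]; ring
      by_cases hd : (P c₀).natDegree = 0
      · have ha := Polynomial.eq_C_of_natDegree_eq_zero hd
        have : Q c₀ = 0 := by
          rw [hQc₀, ha, taylor_C]; ring
        simp [pmeasure, this, hc₀]
      · have hsub : pmeasure (Q c₀) ≤ (P c₀).natDegree := by
          by_cases h0 : Q c₀ = 0
          · simp [pmeasure, h0]
          have hd2 : taylor (t₀:ℂ) (P c₀) - P c₀ ≠ 0 := by
            intro h
            apply h0
            rw [hQc₀, h, mul_zero]
          have htne : taylor (t₀:ℂ) (P c₀) ≠ 0 := by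
            intro h
            exact hc₀ ((taylor_injective (t₀:ℂ)) (by simpa using h))
          have hdeg : (taylor (t₀:ℂ) (P c₀) - P c₀).degree < (P c₀).degree := by
            have heq : (taylor (t₀:ℂ) (P c₀)).degree = (P c₀).degree := by
              rw [degree_eq_natDegree htne, degree_eq_natDegree hc₀, natDegree_taylor]
            exact heq ▸ degree_sub_lt heq htne (leadingCoeff_taylor' _ _)
          have := natDegree_lt_natDegree hd2 hdeg
          simp only [pmeasure, if_neg h0]
          calc (Q c₀).natDegree + 1 ≤ (taylor (t₀:ℂ) (P c₀) - P c₀).natDegree + 1 := by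
                rw [hQc₀]; exact Nat.add_le_add_right (natDegree_C_mul_le _ _) 1
            _ ≤ (P c₀).natDegree := this
        refine lt_of_le_of_lt hsub ?_
        simp [pmeasure, hc₀]
    have hmQ : (∑ c ∈ s, pmeasure (Q c)) ≤ n := by
      have : (∑ c ∈ s, pmeasure (Q c)) < ∑ c ∈ s, pmeasure (P c) :=
        Finset.sum_lt_sum hQle ⟨c₀, hc₀s, hQlt⟩
      omega
    have hQ0 := ih s Q hmQ hTop' hBot'
    have hPc : ∀ c ∈ s, c ≠ c₀ → P c = 0 := by
      intro c hc hne
      by_contra hP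
      have h2 : C (Complex.exp (c * t₀)) * taylor (t₀:ℂ) (P c)
          = C (Complex.exp (c₀ * t₀)) * P c :=
        sub_eq_zero.mp (by simpa [hQdef] using hQ0 c hc)
      have h3 := congrArg leadingCoeff h2
      rw [leadingCoeff_mul, leadingCoeff_mul, leadingCoeff_C, leadingCoeff_C,
        leadingCoeff_taylor'] at h3
      have h4 := mul_right_cancel₀ (leadingCoeff_ne_zero.mpr hP) h3
      exact hgood c hc hne h4
    have hconst : taylor (t₀:ℂ) (P c₀) = P c₀ := by
      have h2 : C (Complex.exp (c₀ * t₀)) * (taylor (t₀:ℂ) (P c₀) - P c₀) = 0 := by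
        have h := hQ0 c₀ hc₀s
        rw [show Q c₀ = C (Complex.exp (c₀ * t₀)) * (taylor (t₀:ℂ) (P c₀) - P c₀) by
          rw [hQdef]; ring] at h
        exact h
      rcases mul_eq_zero.mp h2 with h | h
      · exact absurd h (by simp [Complex.exp_ne_zero])
      · exact sub_eq_zero.mp h
    set a : ℂ := (P c₀).eval 0 with hadef
    have hPa : P c₀ = C a := by
      have hroot : P c₀ - C a = 0 := by
        apply Polynomial.eq_zero_of_infinite_isRoot
        refine Set.infinite_of_injective_forall_mem
          (f := fun n : ℕ => (n : ℂ) * (t₀:ℂ)) ?_ ?_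
        · intro n m h
          have ht : (t₀:ℂ) ≠ 0 := Complex.ofReal_ne_zero.mpr ht₀ne
          exact Nat.cast_injective (mul_right_cancel₀ ht h)
        · intro n
          simp only [Set.mem_setOf_eq, IsRoot, eval_sub, eval_C, sub_eq_zero]
          induction n with
          | zero => simp [hadef]
          | succ k ihk =>
            have hc : ((k+1 : ℕ) : ℂ) * t₀ = (k : ℂ) * t₀ + t₀ := by push_cast; ring
            rw [hc, ← taylor_eval (t₀:ℂ), hconst, ihk]
      have := sub_eq_zero.mp hroot
      simpa using this
    have ha0 : a ≠ 0 := fun h => hc₀ (by rw [hPa, h, map_zero])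
    have hh : ∀ t : ℝ, (∑ c ∈ s, (P c).eval (t:ℂ) * Complex.exp (c * t))
        = a * Complex.exp (c₀ * t) := by
      intro t
      rw [Finset.sum_eq_single c₀ (fun c hc hne => by rw [hPc c hc hne]; simp)
        (fun h => absurd hc₀s h), hPa, eval_C]
    have hnorm : ∀ t : ℝ, ‖a * Complex.exp (c₀ * t)‖ = ‖a‖ * Real.exp (c₀.re * t) := by
      intro t
      rw [norm_mul, Complex.norm_exp]
      congr 2
      simp [Complex.mul_re]
    have hapos : 0 < ‖a‖ := norm_pos_iff.mpr ha0
    rcases le_or_gt 0 c₀.re with hre | hre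
    · have hev := (NormedAddCommGroup.tendsto_nhds_zero.mp hTop) ‖a‖ hapos
      obtain ⟨t, hlt, ht0⟩ := (hev.and (eventually_ge_atTop (0:ℝ))).exists
      rw [hh t, hnorm t] at hlt
      nlinarith [Real.one_le_exp (mul_nonneg hre ht0)]
    · have hev := (NormedAddCommGroup.tendsto_nhds_zero.mp hBot) ‖a‖ hapos
      obtain ⟨t, hlt, ht0⟩ := (hev.and (eventually_le_atBot (0:ℝ))).exists
      rw [hh t, hnorm t] at hlt
      nlinarith [Real.one_le_exp (by nlinarith : (0:ℝ) ≤ c₀.re * t)]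

lemma IsPolyFun.line {V : Type*} [AddCommGroup V] [Module ℝ V] {p : V → ℂ}
    (hp : IsPolyFun p) (v : V) :
    ∃ P : Polynomial ℂ, ∀ t : ℝ, p (t • v) = P.eval (t : ℂ) := by
  refine Algebra.adjoin_induction (p := fun x _ => ∃ P : Polynomial ℂ,
    ∀ t : ℝ, x (t • v) = P.eval (t : ℂ)) ?_ ?_ ?_ ?_ hp
  · rintro g hg
    refine ⟨C (g v) * X, fun t => ?_⟩
    rw [hg.map_smul, Complex.real_smul, eval_mul, eval_C, eval_X, mul_comm]
  · intro r
    exact ⟨C r, fun t => by simp [Pi.algebraMap_apply]⟩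
  · rintro x y _ _ ⟨P, hP⟩ ⟨R, hR⟩
    exact ⟨P + R, fun t => by simp [Pi.add_apply, hP t, hR t]⟩
  · rintro x y _ _ ⟨P, hP⟩ ⟨R, hR⟩
    exact ⟨P * R, fun t => by simp [Pi.mul_apply, hP t, hR t]⟩

lemma IsPolyFun.analyticOnNhd {V : Type*} [NormedAddCommGroup V] [NormedSpace ℝ V]
    [FiniteDimensional ℝ V] {p : V → ℂ} (hp : IsPolyFun p) :
    AnalyticOnNhd ℝ p Set.univ := by
  refine Algebra.adjoin_induction (p := fun x _ => AnalyticOnNhd ℝ x Set.univ)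
    ?_ ?_ ?_ ?_ hp
  · rintro g hg
    have hcont : Continuous g := (IsLinearMap.mk' g hg).continuous_of_finiteDimensional
    let L : V →L[ℝ] ℂ := ⟨IsLinearMap.mk' g hg, hcont⟩
    exact fun x _ => L.analyticAt x
  · intro r
    exact fun x _ => analyticAt_const
  · rintro x y _ _ hx hy
    exact hx.add hy
  · rintro x y _ _ hx hy
    exact hx.mul hy

/-- Let `V` be a finite-dimensional real inner product space, `U ⊆ V` an open set invariant
under multiplication by nonzero real scalars containing a nonzero point, and
`f(X) = Σ_{i} q_i(X) e^{⟨X, λ_i⟩}` an exponential polynomial with the `λ_i ∈ V_ℂ*` distinct.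
If `f(X) → 0` as `|X| → ∞` with `X ∈ U`, then `f` is identically zero. -/
theorem exp_polynomial_tendsto_zero_on_cone_eq_zero
    {V : Type*} [NormedAddCommGroup V] [InnerProductSpace ℝ V] [FiniteDimensional ℝ V]
    (U : Set V) (hUopen : IsOpen U)
    (hUcone : ∀ c : ℝ, c ≠ 0 → ∀ x ∈ U, c • x ∈ U)
    (hUne : ∃ x ∈ U, x ≠ 0)
    (m : ℕ) (q : Fin m → V → ℂ) (hq : ∀ i, IsPolyFun (q i))
    (lam : Fin m → (V →ₗ[ℝ] ℂ)) (hlam : Function.Injective lam)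
    (f : V → ℂ)
    (hf : ∀ X, f X = ∑ i, q i X * Complex.exp (lam i X))
    (hlim : ∀ ε : ℝ, 0 < ε → ∃ R : ℝ, ∀ X ∈ U, R < ‖X‖ → ‖f X‖ < ε) :
    ∀ X, f X = 0 := by
  classical
  have key : ∀ v ∈ U, v ≠ 0 → f v = 0 := by
    intro v hvU hv0
    choose Q hQ using fun i => (hq i).line v
    set μ : Fin m → ℂ := fun i => lam i v with hμ
    set s : Finset ℂ := Finset.image μ Finset.univ with hs
    set P : ℂ → Polynomial ℂ := fun c => ∑ i ∈ Finset.univ.filter (fun i => μ i = c), Q i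
      with hP
    have hline : ∀ t : ℝ, f (t • v) = ∑ c ∈ s, (P c).eval (t:ℂ) * Complex.exp (c * t) := by
      intro t
      rw [hf]
      have h1 : ∀ i, q i (t • v) * Complex.exp (lam i (t • v))
          = (Q i).eval (t:ℂ) * Complex.exp (μ i * t) := by
        intro i
        rw [hQ i t, map_smul, Complex.real_smul]
        congr 1
        exact congrArg Complex.exp (mul_comm _ _)
      simp_rw [h1]
      rw [← Finset.sum_fiberwise_of_maps_to (g := μ)
        (fun i _ => Finset.mem_image_of_mem μ (Finset.mem_univ i))]
      refine Finset.sum_congr rfl (fun c _ => ?_)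
      rw [hP, eval_finset_sum, Finset.sum_mul]
      refine Finset.sum_congr rfl (fun i hi => ?_)
      rw [(Finset.mem_filter.mp hi).2]
    have hvn : 0 < ‖v‖ := norm_pos_iff.mpr hv0
    have hTop : Tendsto (fun t : ℝ => ∑ c ∈ s, (P c).eval (t:ℂ) * Complex.exp (c * t))
        atTop (nhds 0) := by
      simp_rw [← hline]
      rw [NormedAddCommGroup.tendsto_nhds_zero]
      intro ε hε
      obtain ⟨R, hR⟩ := hlim ε hε
      filter_upwards [eventually_ge_atTop (max 1 (R / ‖v‖ + 1))] with t ht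
      have ht1 : (1:ℝ) ≤ t := le_trans (le_max_left _ _) ht
      have htR : R / ‖v‖ + 1 ≤ t := le_trans (le_max_right _ _) ht
      have htne : t ≠ 0 := by linarith
      have hmem : t • v ∈ U := hUcone t htne v hvU
      have hnorm : R < ‖t • v‖ := by
        rw [norm_smul, Real.norm_eq_abs, abs_of_pos (by linarith : (0:ℝ) < t)]
        have h2 : (R / ‖v‖ + 1) * ‖v‖ ≤ t * ‖v‖ :=
          mul_le_mul_of_nonneg_right htR hvn.le
        have h3 : (R / ‖v‖ + 1) * ‖v‖ = R + ‖v‖ := by field_simp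
        linarith
      have := hR (t • v) hmem hnorm
      simpa using this
    have hBot : Tendsto (fun t : ℝ => ∑ c ∈ s, (P c).eval (t:ℂ) * Complex.exp (c * t))
        atBot (nhds 0) := by
      simp_rw [← hline]
      rw [NormedAddCommGroup.tendsto_nhds_zero]
      intro ε hε
      obtain ⟨R, hR⟩ := hlim ε hε
      filter_upwards [eventually_le_atBot (min (-1) (-(R / ‖v‖ + 1)))] with t ht
      have ht1 : t ≤ -1 := le_trans ht (min_le_left _ _)
      have htR : t ≤ -(R / ‖v‖ + 1) := le_trans ht (min_le_right _ _)
      have htne : t ≠ 0 := by linarith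
      have hmem : t • v ∈ U := hUcone t htne v hvU
      have hnorm : R < ‖t • v‖ := by
        rw [norm_smul, Real.norm_eq_abs, abs_of_neg (by linarith : t < (0:ℝ))]
        have h2 : (R / ‖v‖ + 1) * ‖v‖ ≤ (-t) * ‖v‖ :=
          mul_le_mul_of_nonneg_right (by linarith) hvn.le
        have h3 : (R / ‖v‖ + 1) * ‖v‖ = R + ‖v‖ := by field_simp
        linarith
      have := hR (t • v) hmem hnorm
      simpa using this
    have hP0 := expPoly_decay_eq_zero (∑ c ∈ s, pmeasure (P c)) s P le_rfl hTop hBot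
    have h1 := hline 1
    rw [one_smul] at h1
    rw [h1]
    refine Finset.sum_eq_zero (fun c hc => ?_)
    rw [hP0 c hc]
    simp
  obtain ⟨x, hxU, hx0⟩ := hUne
  have hL : ∀ i : Fin m, AnalyticOnNhd ℝ (fun X => Complex.exp (lam i X)) Set.univ := by
    intro i z _
    have hcont : Continuous (lam i) := (lam i).continuous_of_finiteDimensional
    let L : V →L[ℝ] ℂ := ⟨lam i, hcont⟩
    exact (analyticAt_cexp.restrictScalars).comp (L.analyticAt z)
  have hfa : AnalyticOnNhd ℝ f Set.univ := by
    have hsum : AnalyticOnNhd ℝ (fun X => ∑ i, q i X * Complex.exp (lam i X)) Set.univ :=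
      by simpa only [Finset.sum_fn] using Finset.analyticOnNhd_sum Finset.univ (fun i _ => ((hq i).analyticOnNhd).mul (hL i))
    exact (funext hf : f = _) ▸ hsum
  have hW : IsOpen (U ∩ {y : V | y ≠ 0}) := hUopen.inter isOpen_ne
  have hev : f =ᶠ[nhds x] 0 := by
    filter_upwards [hW.mem_nhds ⟨hxU, hx0⟩] with y hy
    exact key y hy.1 hy.2
  have heq := hfa.eqOn_zero_of_preconnected_of_eventuallyEq_zero isPreconnected_univ
    (Set.mem_univ x) hev
  intro X
  exact heq (Set.mem_univ X)
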